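/- Let X and Y be real symmetric n×n matrices with Y positive definite, and set Z = X + iY as a complex n×n matrix. Then Z is invertible, and if Z⁻¹ = V + iW with V, W real, then W = −(X·Y⁻¹·X + Y)⁻¹ and V = Y⁻¹·X·(X·Y⁻¹·X + Y)⁻¹. -/

import Mathlib

open Matrix Complex

/-- For real symmetric `X, Y` with `Y` positive definite, the complex matrix
`Z = X + iY` is invertible, and if `Z⁻¹ = V + iW` with `V, W` real, then
`W = −(X·Y⁻¹·X + Y)⁻¹` and `V = Y⁻¹·X·(X·Y⁻¹·X + Y)⁻¹`. -/
theorem inv_of_X_add_iY {n : ℕ} (X Y : Matrix (Fin n) (Fin n) ℝ)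
    (hX : X.IsSymm) (hY : Y.IsSymm) (hYpd : Y.PosDef) :
    IsUnit (X.map (Complex.ofReal) + Complex.I • Y.map (Complex.ofReal)) ∧
    ∀ V W : Matrix (Fin n) (Fin n) ℝ,
      (X.map (Complex.ofReal) + Complex.I • Y.map (Complex.ofReal))⁻¹ =
        V.map (Complex.ofReal) + Complex.I • W.map (Complex.ofReal) →
      W = -(X * Y⁻¹ * X + Y)⁻¹ ∧ V = Y⁻¹ * X * (X * Y⁻¹ * X + Y)⁻¹ := by
  set M : Matrix (Fin n) (Fin n) ℝ →+* Matrix (Fin n) (Fin n) ℂ :=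
    Complex.ofRealHom.mapMatrix with hM
  have hmap : ∀ P : Matrix (Fin n) (Fin n) ℝ, P.map Complex.ofReal = M P := fun _ => rfl
  -- S = X Y⁻¹ X + Y is positive definite
  have hXYX : (X * Y⁻¹ * X).PosSemidef := by
    have h1 : (Xᴴ * Y⁻¹ * X).PosSemidef :=
      hYpd.inv.posSemidef.conjTranspose_mul_mul_same X
    have hXh : Xᴴ = X := by
      ext i j; simpa using congrFun (congrFun hX i) j
    rwa [hXh] at h1
  have hS : (X * Y⁻¹ * X + Y).PosDef := Matrix.PosDef.posSemidef_add hXYX hYpd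
  set S : Matrix (Fin n) (Fin n) ℝ := X * Y⁻¹ * X + Y with hSdef
  have hSinv : S * S⁻¹ = 1 := Matrix.mul_nonsing_inv S (isUnit_iff_ne_zero.mpr hS.det_pos.ne')
  have hYinv : Y * Y⁻¹ = 1 := Matrix.mul_nonsing_inv Y (isUnit_iff_ne_zero.mpr hYpd.det_pos.ne')
  set W₀ : Matrix (Fin n) (Fin n) ℝ := -S⁻¹ with hW₀
  set V₀ : Matrix (Fin n) (Fin n) ℝ := Y⁻¹ * X * S⁻¹ with hV₀
  have h1 : X * V₀ - Y * W₀ = 1 := by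
    have : X * (Y⁻¹ * X * S⁻¹) - Y * (-S⁻¹) = (X * Y⁻¹ * X + Y) * S⁻¹ := by
      noncomm_ring
    rw [hV₀, hW₀, this, ← hSdef, hSinv]
  have h2 : X * W₀ + Y * V₀ = 0 := by
    have : X * (-S⁻¹) + Y * (Y⁻¹ * X * S⁻¹) = -(X * S⁻¹) + (Y * Y⁻¹) * (X * S⁻¹) := by
      noncomm_ring
    rw [hW₀, hV₀, this, hYinv, one_mul, neg_add_cancel]
  -- the key multiplication identity over ℂ
  have key : ∀ P Q : Matrix (Fin n) (Fin n) ℝ,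
      (M X + Complex.I • M Y) * (M P + Complex.I • M Q)
      = M (X * P - Y * Q) + Complex.I • M (X * Q + Y * P) := by
    intro P Q
    simp only [_root_.map_sub, _root_.map_add, _root_.map_mul]
    rw [add_mul, mul_add, mul_add, smul_mul_assoc, smul_mul_assoc,
      mul_smul_comm, mul_smul_comm, smul_smul, Complex.I_mul_I, neg_one_smul,
      smul_add]
    abel
  have hmul : (M X + Complex.I • M Y) * (M V₀ + Complex.I • M W₀) = 1 := by
    rw [key, h1, h2]; simp
  have hunit : IsUnit (M X + Complex.I • M Y) := by
    apply (Matrix.isUnit_iff_isUnit_det _).mpr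
    exact IsUnit.of_mul_eq_one _ (by rw [← Matrix.det_mul, hmul, Matrix.det_one])
  have hinv : (M X + Complex.I • M Y)⁻¹ = M V₀ + Complex.I • M W₀ :=
    Matrix.inv_eq_right_inv hmul
  refine ⟨by rw [hmap X, hmap Y]; exact hunit, fun V W hVW => ?_⟩
  rw [hmap X, hmap Y, hmap V, hmap W, hinv] at hVW
  have hentry : ∀ i j, (V₀ i j : ℂ) + Complex.I * (W₀ i j : ℂ)
      = (V i j : ℂ) + Complex.I * (W i j : ℂ) := by
    intro i j
    have := congrFun (congrFun hVW i) j
    simpa [hM, Matrix.add_apply, Matrix.smul_apply, RingHom.mapMatrix_apply,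
      Matrix.map_apply, smul_eq_mul] using this
  have hVeq : V = V₀ := by
    ext i j
    have := hentry i j
    have hre := congrArg Complex.re this
    simpa using hre.symm
  have hWeq : W = W₀ := by
    ext i j
    have := hentry i j
    have him := congrArg Complex.im this
    simpa using him.symm
  exact ⟨by rw [hWeq, hW₀], by rw [hVeq, hV₀]⟩
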